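/- Let f : ℕ → ℝ be positive and non-decreasing, α_1 < ... < α_n (n ≥ 2). The minimum of range(S)/f(|S|) + range(S̄)/f(|S̄|) over all bipartitions of V equals min over i ∈ {1,...,n-1} of (α_i - α_1)/f(i) + (α_n - α_{i+1})/f(n - i). -/

import Mathlib

open Finset

noncomputable def rng {n : ℕ} (α : Fin n → ℝ) (S : Finset (Fin n)) : ℝ :=
  if h : S.Nonempty then S.sup' h α - S.inf' h α else 0

lemma rng_eq_of {n : ℕ} (α : Fin n → ℝ) (hα : Monotone α) (S : Finset (Fin n))
    (hS : S.Nonempty) (u v : Fin n) (hu : u ∈ S) (hv : v ∈ S)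
    (hul : ∀ j ∈ S, u ≤ j) (hvl : ∀ j ∈ S, j ≤ v) :
    rng α S = α v - α u := by
  rw [rng, dif_pos hS]
  congr 1
  · exact le_antisymm (Finset.sup'_le _ _ fun j hj => hα (hvl j hj)) (Finset.le_sup' α hv)
  · exact le_antisymm (Finset.inf'_le α hu) (Finset.le_inf' _ _ fun j hj => hα (hul j hj))

lemma rng_ge {n : ℕ} (α : Fin n → ℝ) (S : Finset (Fin n)) (hS : S.Nonempty)
    (u v : Fin n) (hu : u ∈ S) (hv : v ∈ S) : α v - α u ≤ rng α S := by
  rw [rng, dif_pos hS]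
  exact sub_le_sub (Finset.le_sup' α hv) (Finset.inf'_le α hu)

lemma rng_nonneg {n : ℕ} (α : Fin n → ℝ) (S : Finset (Fin n)) : 0 ≤ rng α S := by
  rw [rng]
  split
  · next h =>
    obtain ⟨u, hu⟩ := h
    have := sub_le_sub (Finset.le_sup' α hu) (Finset.inf'_le α hu)
    simpa using this
  · exact le_refl 0

/-- The minimum of `range(S)/f(|S|) + range(S̄)/f(|S̄|)` over bipartitions equals the
minimum over split points `i` of `(α_i - α_1)/f(i) + (α_n - α_{i+1})/f(n-i)`
(0-based: split after element `i`, prefix size `i+1`). -/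
theorem stmt8 (n : ℕ) (hn : 2 ≤ n) (α : Fin n → ℝ) (hα : StrictMono α)
    (f : ℕ → ℝ) (hfpos : ∀ m : ℕ, 0 < m → 0 < f m) (hfmono : Monotone f) :
    sInf {x : ℝ | ∃ S : Finset (Fin n), S.Nonempty ∧ Sᶜ.Nonempty ∧
        x = rng α S / f S.card + rng α Sᶜ / f Sᶜ.card} =
    sInf {x : ℝ | ∃ i : ℕ, ∃ hi : i + 1 < n,
        x = (α ⟨i, by omega⟩ - α ⟨0, by omega⟩) / f (i + 1) +
          (α ⟨n - 1, by omega⟩ - α ⟨i + 1, hi⟩) / f (n - (i + 1))} := by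
  set L := {x : ℝ | ∃ S : Finset (Fin n), S.Nonempty ∧ Sᶜ.Nonempty ∧
      x = rng α S / f S.card + rng α Sᶜ / f Sᶜ.card} with hLdef
  set R := {x : ℝ | ∃ i : ℕ, ∃ hi : i + 1 < n,
      x = (α ⟨i, by omega⟩ - α ⟨0, by omega⟩) / f (i + 1) +
        (α ⟨n - 1, by omega⟩ - α ⟨i + 1, hi⟩) / f (n - (i + 1))} with hRdef
  -- every split value is a bipartition value
  have hRsubL : R ⊆ L := by
    rintro x ⟨i, hi, rfl⟩
    have hin : i < n := by omega
    refine ⟨Finset.Iic (⟨i, hin⟩ : Fin n), ⟨⟨i, hin⟩, Finset.mem_Iic.mpr le_rfl⟩, ?_, ?_⟩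
    · exact ⟨⟨i + 1, hi⟩, by simp [Finset.mem_Iic, Fin.le_def]⟩
    · have hcard : (Finset.Iic (⟨i, hin⟩ : Fin n)).card = i + 1 := by
        simpa using Fin.card_Iic (⟨i, hin⟩ : Fin n)
      have hcardc : (Finset.Iic (⟨i, hin⟩ : Fin n))ᶜ.card = n - (i + 1) := by
        rw [Finset.card_compl, hcard, Fintype.card_fin]
      have h1 : rng α (Finset.Iic (⟨i, hin⟩ : Fin n)) = α ⟨i, hin⟩ - α ⟨0, by omega⟩ := by
        refine rng_eq_of α hα.monotone _ ⟨⟨i, hin⟩, Finset.mem_Iic.mpr le_rfl⟩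
          ⟨0, by omega⟩ ⟨i, hin⟩ ?_ (Finset.mem_Iic.mpr le_rfl) ?_ ?_
        · exact Finset.mem_Iic.mpr (by simp [Fin.le_def])
        · intro j _; simp [Fin.le_def]
        · intro j hj; exact Finset.mem_Iic.mp hj
      have h2 : rng α (Finset.Iic (⟨i, hin⟩ : Fin n))ᶜ = α ⟨n - 1, by omega⟩ - α ⟨i + 1, hi⟩ := by
        have hmem1 : (⟨i + 1, hi⟩ : Fin n) ∈ (Finset.Iic (⟨i, hin⟩ : Fin n))ᶜ := by
          simp [Finset.mem_Iic, Fin.le_def]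
        have hmem2 : (⟨n - 1, by omega⟩ : Fin n) ∈ (Finset.Iic (⟨i, hin⟩ : Fin n))ᶜ := by
          simp [Finset.mem_Iic, Fin.le_def]; omega
        refine rng_eq_of α hα.monotone _ ⟨_, hmem1⟩ ⟨i + 1, hi⟩ ⟨n - 1, by omega⟩
          hmem1 hmem2 ?_ ?_
        · intro j hj
          simp only [Finset.mem_compl, Finset.mem_Iic, Fin.le_def, not_le] at hj
          simp [Fin.le_def]; omega
        · intro j hj
          simp [Fin.le_def]; omega
      rw [h1, h2, hcard, hcardc]
  -- L is finite
  have hLfin : L.Finite := by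
    apply Set.Finite.subset
      (Set.finite_range fun S : Finset (Fin n) => rng α S / f S.card + rng α Sᶜ / f Sᶜ.card)
    rintro x ⟨S, _, _, hx⟩
    exact ⟨S, hx.symm⟩
  have hRne : R.Nonempty := by
    refine ⟨_, 0, by omega, rfl⟩
  have hLne : L.Nonempty := ⟨_, hRsubL hRne.choose_spec⟩
  -- key: every bipartition value dominates some split value
  have main : ∀ S : Finset (Fin n), S.Nonempty → Sᶜ.Nonempty → (⟨0, by omega⟩ : Fin n) ∈ S →
      ∃ y ∈ R, y ≤ rng α S / f S.card + rng α Sᶜ / f Sᶜ.card := by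
    intro S hS hSc h0
    have ht1 : 1 ≤ S.card := Finset.card_pos.mpr hS
    have htc1 : 1 ≤ Sᶜ.card := Finset.card_pos.mpr hSc
    have hsum : S.card + Sᶜ.card = n := by
      rw [Finset.card_add_card_compl, Fintype.card_fin]
    have htn : S.card < n := by omega
    have hcardc : Sᶜ.card = n - S.card := by omega
    by_cases htop : (⟨n - 1, by omega⟩ : Fin n) ∈ S
    · -- S contains both extremes; split at i = 0
      refine ⟨_, ⟨0, by omega, rfl⟩, ?_⟩
      have e0 : α (⟨0, by omega⟩ : Fin n) - α ⟨0, by omega⟩ = 0 := sub_self _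
      have hnum : α (⟨n - 1, by omega⟩ : Fin n) - α ⟨0 + 1, by omega⟩ ≤ rng α S := by
        have := rng_ge α S hS ⟨0, by omega⟩ ⟨n - 1, by omega⟩ h0 htop
        have h01 : α (⟨0, by omega⟩ : Fin n) ≤ α ⟨0 + 1, by omega⟩ :=
          hα.monotone (by simp [Fin.le_def])
        linarith
      have hnn : 0 ≤ α (⟨n - 1, by omega⟩ : Fin n) - α ⟨0 + 1, by omega⟩ := by
        have : α (⟨0 + 1, by omega⟩ : Fin n) ≤ α ⟨n - 1, by omega⟩ :=
          hα.monotone (by simp [Fin.le_def]; omega)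
        linarith
      have hfS : 0 < f S.card := hfpos _ (by omega)
      have hfn1 : f S.card ≤ f (n - (0 + 1)) := hfmono (by omega)
      have hstep : (α (⟨n - 1, by omega⟩ : Fin n) - α ⟨0 + 1, by omega⟩) / f (n - (0 + 1))
          ≤ rng α S / f S.card := by
        calc (α (⟨n - 1, by omega⟩ : Fin n) - α ⟨0 + 1, by omega⟩) / f (n - (0 + 1))
            ≤ (α (⟨n - 1, by omega⟩ : Fin n) - α ⟨0 + 1, by omega⟩) / f S.card := by
              gcongr
          _ ≤ rng α S / f S.card := by gcongr
      have hsecond : 0 ≤ rng α Sᶜ / f Sᶜ.card :=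
        div_nonneg (rng_nonneg α _) (le_of_lt (hfpos _ (by omega)))
      rw [e0, zero_div, zero_add]
      linarith
    · -- top is in the complement; split at i = S.card - 1
      obtain ⟨s, hs⟩ : ∃ s, S.card = s + 1 := ⟨S.card - 1, by omega⟩
      have hi : s + 1 < n := by omega
      have htopc : (⟨n - 1, by omega⟩ : Fin n) ∈ Sᶜ := Finset.mem_compl.mpr htop
      -- max of S has index ≥ s
      set M := S.max' hS with hM
      have hsubM : S ⊆ Finset.Iic M := fun j hj => Finset.mem_Iic.mpr (S.le_max' j hj)
      have hMcard : S.card ≤ (M : ℕ) + 1 := by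
        have := Finset.card_le_card hsubM
        simpa [Fin.card_Iic] using this
      have hαs : α (⟨s, by omega⟩ : Fin n) ≤ α M :=
        hα.monotone (by simp [Fin.le_def]; omega)
      -- some element of Sᶜ has index ≤ s + 1
      have hex : ∃ u ∈ Sᶜ, (u : Fin n) ≤ ⟨s + 1, hi⟩ := by
        by_contra hcon
        push_neg at hcon
        have hsub2 : Finset.Iic (⟨s + 1, hi⟩ : Fin n) ⊆ S := by
          intro j hj
          by_contra hjS
          exact absurd (Finset.mem_Iic.mp hj) (not_le.mpr (hcon j (Finset.mem_compl.mpr hjS)))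
        have := Finset.card_le_card hsub2
        simp [Fin.card_Iic] at this
        omega
      obtain ⟨u, huc, hus⟩ := hex
      refine ⟨_, ⟨s, hi, rfl⟩, ?_⟩
      have hterm1 : (α (⟨s, by omega⟩ : Fin n) - α ⟨0, by omega⟩) / f (s + 1)
          ≤ rng α S / f S.card := by
        have hfeq : f S.card = f (s + 1) := by rw [hs]
        rw [← hfeq]
        have hrg := rng_ge α S hS ⟨0, by omega⟩ M h0 (S.max'_mem hS)
        have : α (⟨s, by omega⟩ : Fin n) - α ⟨0, by omega⟩ ≤ rng α S := by linarith
        exact div_le_div_of_nonneg_right this (le_of_lt (hfpos _ (by omega)))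
      have hterm2 : (α (⟨n - 1, by omega⟩ : Fin n) - α ⟨s + 1, hi⟩) / f (n - (s + 1))
          ≤ rng α Sᶜ / f Sᶜ.card := by
        have hrg := rng_ge α Sᶜ hSc u ⟨n - 1, by omega⟩ huc htopc
        have hαu : α u ≤ α ⟨s + 1, hi⟩ := hα.monotone hus
        have hnum : α (⟨n - 1, by omega⟩ : Fin n) - α ⟨s + 1, hi⟩ ≤ rng α Sᶜ := by linarith
        have hfeq : f Sᶜ.card = f (n - (s + 1)) := by rw [hcardc, hs]
        rw [← hfeq]
        exact div_le_div_of_nonneg_right hnum (le_of_lt (hfpos _ (by omega)))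
      exact add_le_add hterm1 hterm2
  have key : ∀ x ∈ L, ∃ y ∈ R, y ≤ x := by
    rintro x ⟨S, hS, hSc, rfl⟩
    by_cases h0 : (⟨0, by omega⟩ : Fin n) ∈ S
    · exact main S hS hSc h0
    · have h0c : (⟨0, by omega⟩ : Fin n) ∈ Sᶜ := Finset.mem_compl.mpr h0
      have hS' : Sᶜᶜ.Nonempty := by rwa [compl_compl]
      obtain ⟨y, hyR, hy⟩ := main Sᶜ hSc hS' h0c
      refine ⟨y, hyR, ?_⟩
      rw [compl_compl] at hy
      linarith
  apply le_antisymm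
  · exact csInf_le_csInf hLfin.bddBelow hRne hRsubL
  · refine le_csInf hLne fun x hx => ?_
    obtain ⟨y, hyR, hyx⟩ := key x hx
    exact le_trans (csInf_le (hLfin.subset hRsubL).bddBelow hyR) hyx
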